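/- arXiv:2402.04774 — 2 statements merged into one kernel-verified Lean document; each statement's English description precedes it below -/
import Mathlib

section
/- Let μ : 2^X → ℝ with μ(∅)=0, i ≠ j in X, and define μ' : 2^{X\{i}} → ℝ by μ'(S) = μ(S ∪ {i}) and μ'' : 2^{X\{i}} → ℝ by μ''(S) = μ(S). Then the Murofushi–Soneda interaction index satisfies I_{ij}(μ) = Sh_j(μ') − Sh_j(μ''), where Sh_j denotes the Shapley value of j in the ground set X\{i}. -/
open Finset

/-- The Shapley value of `j` for a set function `v` on a finite ground set `β`. -/
noncomputable def Sh {β : Type*} [Fintype β] [DecidableEq β] (v : Finset β → ℝ) (j : β) : ℝ :=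
  ∑ k ∈ range (Fintype.card β),
    ((Nat.factorial (Fintype.card β - k - 1) * Nat.factorial k : ℕ) : ℝ) /
      (Nat.factorial (Fintype.card β)) *
      ∑ K ∈ (Finset.univ.erase j).powersetCard k, (v (insert j K) - v K)

theorem interaction_eq_shapley_diff {α : Type*} [Fintype α] [DecidableEq α]
    (μ : Finset α → ℝ) (hμ : μ ∅ = 0) (hn : 2 ≤ Fintype.card α)
    (i j : α) (hij : i ≠ j) :
    ∑ k ∈ range (Fintype.card α - 1),
      ((Nat.factorial (Fintype.card α - k - 2) * Nat.factorial k : ℕ) : ℝ) /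
        (Nat.factorial (Fintype.card α - 1)) *
        ∑ K ∈ ((Finset.univ.erase i).erase j).powersetCard k,
          (μ (insert i (insert j K)) - μ (insert i K) - μ (insert j K) + μ K)
    = Sh (fun S : Finset {x : α // x ≠ i} => μ (insert i (S.image Subtype.val))) ⟨j, hij.symm⟩
      - Sh (fun S : Finset {x : α // x ≠ i} => μ (S.image Subtype.val)) ⟨j, hij.symm⟩ := by
  have hm : Fintype.card {x : α // x ≠ i} = Fintype.card α - 1 := by
    simp [Fintype.card_subtype_compl]
  unfold Sh
  rw [hm, ← Finset.sum_sub_distrib]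
  refine Finset.sum_congr rfl fun k hk => ?_
  have hfac : Fintype.card α - 1 - k - 1 = Fintype.card α - k - 2 := by omega
  rw [hfac, ← mul_sub, ← Finset.sum_sub_distrib]
  congr 1
  refine Finset.sum_bij' (fun K (_ : K ∈ _) => K.subtype (· ≠ i))
    (fun S (_ : S ∈ _) => S.image Subtype.val) ?_ ?_ ?_ ?_ ?_
  · intro K hK
    rw [mem_powersetCard] at hK ⊢
    obtain ⟨hKs, hKc⟩ := hK
    constructor
    · intro x hx
      rw [Finset.mem_subtype] at hx
      have := hKs hx
      simp only [mem_erase] at this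
      simp [mem_erase, Subtype.ext_iff, this.1]
    · show #(K.subtype (· ≠ i)) = k
      rw [Finset.card_subtype, Finset.filter_true_of_mem, hKc]
      intro x hx
      have := hKs hx
      simp only [mem_erase] at this
      exact this.2.1
  · intro S hS
    rw [mem_powersetCard] at hS ⊢
    obtain ⟨hSs, hSc⟩ := hS
    constructor
    · intro x hx
      rw [Finset.mem_image] at hx
      obtain ⟨a, ha, rfl⟩ := hx
      have := hSs ha
      simp only [mem_erase] at this
      simp only [mem_erase]
      refine ⟨?_, a.2, mem_univ _⟩
      intro h; exact this.1 (Subtype.ext h)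
    · rw [Finset.card_image_of_injective _ Subtype.val_injective]; exact hSc
  · intro K hK
    rw [mem_powersetCard] at hK
    ext a
    simp only [Finset.mem_image, Finset.mem_subtype]
    constructor
    · rintro ⟨b, hb, rfl⟩; exact hb
    · intro ha
      have hai : a ≠ i := by
        have := hK.1 ha; simp only [mem_erase] at this; exact this.2.1
      exact ⟨⟨a, hai⟩, by simpa using ha, rfl⟩
  · intro S hS
    ext a
    simp only [Finset.mem_subtype, Finset.mem_image]
    constructor
    · rintro ⟨b, hb, hba⟩; exact (Subtype.ext hba) ▸ hb
    · intro ha; exact ⟨a, ha, rfl⟩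
  · intro K hK
    have him : ((K.subtype (· ≠ i)).image Subtype.val) = K := by
      rw [mem_powersetCard] at hK
      ext a
      simp only [Finset.mem_image, Finset.mem_subtype]
      constructor
      · rintro ⟨b, hb, rfl⟩; exact hb
      · intro ha
        have hai : a ≠ i := by
          have := hK.1 ha; simp only [mem_erase] at this; exact this.2.1
        exact ⟨⟨a, hai⟩, by simpa using ha, rfl⟩
    have hins : (insert (⟨j, hij.symm⟩ : {x : α // x ≠ i}) (K.subtype (· ≠ i))).image Subtype.val
        = insert j K := by
      rw [Finset.image_insert, him]
    simp only [hins, him]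
    ring
end

section
/- Let T ⊆ X be nonempty with distinguished element t₁, and let X' = (X\T) ∪ {t₁}. Then the representation index satisfies I_T(μ) = (1/(n−|T|+1)!) Σ_{o ∈ π(X')} Σ_{L ⊆ T} (−1)^{|T|−|L|} μ(Pred_{t₁}(o) ∪ L), where the outer sum is over all orderings of X' and Pred_{t₁}(o) ⊆ X'\{t₁} is the set of predecessors of t₁. -/
open Finset

section Aux

set_option linter.unusedSectionVars false
set_option maxHeartbeats 1000000

variable {β : Type*} [Fintype β] [DecidableEq β]

lemma filter_lt_card {N : ℕ} (o : β ≃ Fin N) (c : Fin N) :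
    (univ.filter fun x => o x < c).card = (c : ℕ) := by
  have h : (univ.filter fun x => o x < c) = (Finset.Iio c).map o.symm.toEmbedding := by
    ext x
    simp only [mem_filter, mem_univ, true_and, mem_map, Finset.mem_Iio,
      Equiv.coe_toEmbedding, Equiv.symm_apply_eq]
    constructor
    · exact fun h => ⟨o x, h, rfl⟩
    · rintro ⟨j, hj, rfl⟩; exact hj
  rw [h, Finset.card_map, Fin.card_Iio]

lemma fiber_card {N : ℕ} (hN : Fintype.card β = N) (b₀ : β) (K : Finset β)
    (hK : K ⊆ univ.erase b₀) :
    Fintype.card {o : β ≃ Fin N // univ.filter (fun x => o x < o b₀) = K}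
      = K.card.factorial * (N - 1 - K.card).factorial := by
  classical
  set k := K.card with hk
  have hb₀K : b₀ ∉ K := fun h => (mem_erase.mp (hK h)).1 rfl
  have hN1 : 1 ≤ N := by
    have : 0 < Fintype.card β := @Fintype.card_pos _ _ ⟨b₀⟩
    omega
  have hkN : k + 1 ≤ N := by
    have h1 := card_le_card hK
    rw [card_erase_of_mem (mem_univ _), card_univ, hN] at h1
    omega
  set R : Finset β := univ \ insert b₀ K with hRdef
  have hRmem : ∀ x : β, x ∈ R ↔ x ≠ b₀ ∧ x ∉ K := by
    intro x; simp [hRdef, mem_sdiff, mem_insert, not_or]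
  have hRcard : R.card = N - (k + 1) := by
    rw [hRdef, card_sdiff_of_subset (subset_univ _), card_univ, hN,
      card_insert_of_notMem hb₀K]
  -- basic facts about elements of the fiber
  have hob : ∀ o : β ≃ Fin N, (univ.filter fun x => o x < o b₀) = K →
      (o b₀ : ℕ) = k := by
    intro o ho
    have := filter_lt_card o (o b₀)
    rw [ho] at this
    omega
  have hmem : ∀ o : β ≃ Fin N, (univ.filter fun x => o x < o b₀) = K →
      ∀ x : β, x ∈ K ↔ (o x : ℕ) < k := by
    intro o ho x
    rw [← ho, mem_filter]
    have := hob o ho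
    simp [Fin.lt_def, this]
  have hhigh : ∀ o : β ≃ Fin N, (univ.filter fun x => o x < o b₀) = K →
      ∀ x : β, x ∈ R → k + 1 ≤ (o x : ℕ) := by
    intro o ho x hx
    rw [hRmem] at hx
    have h1 : ¬ (o x : ℕ) < k := fun hc => hx.2 ((hmem o ho x).2 hc)
    have h2 : (o x : ℕ) ≠ k := by
      intro hc
      exact hx.1 (o.injective (Fin.val_injective (hc.trans (hob o ho).symm)))
    omega
  -- the map to pairs of equivs
  let Ψ : {o : β ≃ Fin N // univ.filter (fun x => o x < o b₀) = K} →
      ({x : β // x ∈ K} ≃ Fin k) × ({x : β // x ∈ R} ≃ Fin (N - 1 - k)) :=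
    fun op =>
      (Equiv.ofBijective (fun x => ⟨(op.1 x.1 : ℕ), (hmem op.1 op.2 x.1).1 x.2⟩)
        (by
          rw [Fintype.bijective_iff_injective_and_card]
          refine ⟨fun a b hab => ?_, by simp [hk]⟩
          have hv := congrArg Fin.val hab
          dsimp at hv
          exact Subtype.ext (op.1.injective (Fin.val_injective hv))),
       Equiv.ofBijective (fun x => ⟨(op.1 x.1 : ℕ) - (k + 1), by
          have h1 := hhigh op.1 op.2 x.1 x.2
          have h2 : (op.1 x.1 : ℕ) < N := (op.1 x.1).isLt
          omega⟩)
        (by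
          rw [Fintype.bijective_iff_injective_and_card]
          constructor
          · intro a b hab
            have hv := congrArg Fin.val hab
            dsimp at hv
            have h1 := hhigh op.1 op.2 a.1 a.2
            have h2 := hhigh op.1 op.2 b.1 b.2
            have : (op.1 a.1 : ℕ) = (op.1 b.1 : ℕ) := by omega
            exact Subtype.ext (op.1.injective (Fin.val_injective this))
          · simp only [Fintype.card_coe, Fintype.card_fin, hRcard]
            omega))
  have hΨinj : Function.Injective Ψ := by
    rintro ⟨o, ho⟩ ⟨o', ho'⟩ hpq
    have h1 := congrArg Prod.fst hpq
    have h2 := congrArg Prod.snd hpq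
    simp only [Ψ] at h1 h2
    suffices h : ∀ x, (o x : ℕ) = (o' x : ℕ) by
      exact Subtype.ext (Equiv.ext fun x => Fin.val_injective (h x))
    intro x
    rcases em (x ∈ K) with hx | hx
    · have := congrArg (fun e => ((e ⟨x, hx⟩ : Fin k) : ℕ)) h1
      simpa using this
    · rcases em (x = b₀) with hb | hb
      · subst hb
        rw [hob o ho, hob o' ho']
      · have hxR : x ∈ R := (hRmem x).2 ⟨hb, hx⟩
        have := congrArg (fun e => ((e ⟨x, hxR⟩ : Fin (N - 1 - k)) : ℕ)) h2
        simp only [Equiv.ofBijective_apply] at this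
        change (o x : ℕ) - (k + 1) = (o' x : ℕ) - (k + 1) at this
        have ha := hhigh o ho x hxR
        have hb' := hhigh o' ho' x hxR
        omega
  have hΨsurj : Function.Surjective Ψ := by
    rintro ⟨a, b⟩
    -- build the equiv
    let f : β → Fin N := fun x =>
      if hx : x ∈ K then ⟨(a ⟨x, hx⟩ : ℕ), by have := (a ⟨x, hx⟩).isLt; omega⟩
      else if hx' : x ∈ R then ⟨k + 1 + (b ⟨x, hx'⟩ : ℕ), by
        have := (b ⟨x, hx'⟩).isLt; omega⟩
      else ⟨k, by omega⟩
    have hnotKR : ∀ x : β, x ∉ K → x ∉ R → x = b₀ := by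
      intro x h1 h2
      by_contra hb
      exact h2 ((hRmem x).2 ⟨hb, h1⟩)
    have hfb₀ : (f b₀ : ℕ) = k := by
      have hR : b₀ ∉ R := fun h => ((hRmem b₀).1 h).1 rfl
      simp [f, hb₀K, hR]
    have hfK : ∀ x (hx : x ∈ K), (f x : ℕ) = (a ⟨x, hx⟩ : ℕ) := by
      intro x hx; simp [f, hx]
    have hfR : ∀ x (hx : x ∈ R), (f x : ℕ) = k + 1 + (b ⟨x, hx⟩ : ℕ) := by
      intro x hx
      have : x ∉ K := ((hRmem x).1 hx).2
      simp [f, this, hx]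
    have hinj : Function.Injective f := by
      intro x y hxy
      have hv : (f x : ℕ) = (f y : ℕ) := congrArg Fin.val hxy
      rcases em (x ∈ K) with hx | hx <;> rcases em (y ∈ K) with hy | hy
      · rw [hfK x hx, hfK y hy] at hv
        have : (⟨x, hx⟩ : {x : β // x ∈ K}) = ⟨y, hy⟩ :=
          a.injective (Fin.val_injective hv)
        exact congrArg Subtype.val this
      · rcases em (y ∈ R) with hy' | hy'
        · rw [hfK x hx, hfR y hy'] at hv
          have := ((a ⟨x, hx⟩)).isLt; omega
        · rw [hfK x hx, hnotKR y hy hy'] at hv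
          rw [hfb₀] at hv
          have := ((a ⟨x, hx⟩)).isLt; omega
      · rcases em (x ∈ R) with hx' | hx'
        · rw [hfR x hx', hfK y hy] at hv
          have := ((a ⟨y, hy⟩)).isLt; omega
        · rw [hnotKR x hx hx'] at hv
          rw [hfb₀, hfK y hy] at hv
          have := ((a ⟨y, hy⟩)).isLt; omega
      · rcases em (x ∈ R) with hx' | hx' <;> rcases em (y ∈ R) with hy' | hy'
        · rw [hfR x hx', hfR y hy'] at hv
          have : (⟨x, hx'⟩ : {x : β // x ∈ R}) = ⟨y, hy'⟩ :=
            b.injective (Fin.val_injective (by omega))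
          exact congrArg Subtype.val this
        · rw [hfR x hx', hnotKR y hy hy', hfb₀] at hv; omega
        · rw [hnotKR x hx hx', hfb₀, hfR y hy'] at hv; omega
        · rw [hnotKR x hx hx', hnotKR y hy hy']
    have hbij : Function.Bijective f := by
      rw [Fintype.bijective_iff_injective_and_card, hN]
      exact ⟨hinj, by simp⟩
    let o : β ≃ Fin N := Equiv.ofBijective f hbij
    have hoapp : ∀ x, o x = f x := fun x => rfl
    have hob₀ : (o b₀ : ℕ) = k := hfb₀
    have hfil : (univ.filter fun x => o x < o b₀) = K := by
      ext x
      simp only [mem_filter, mem_univ, true_and, Fin.lt_def, hoapp, hfb₀]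
      constructor
      · intro hlt
        by_contra hx
        rcases em (x ∈ R) with hx' | hx'
        · rw [hfR x hx'] at hlt; omega
        · rw [hnotKR x hx hx', hfb₀] at hlt; omega
      · intro hx
        rw [hfK x hx]
        exact (a ⟨x, hx⟩).isLt
    refine ⟨⟨o, hfil⟩, ?_⟩
    have h1 : (Ψ ⟨o, hfil⟩).1 = a := by
      ext x
      simp only [Ψ, Equiv.ofBijective_apply]
      exact hfK x.1 x.2
    have h2 : (Ψ ⟨o, hfil⟩).2 = b := by
      ext ⟨x, hx⟩
      simp only [Ψ, Equiv.ofBijective_apply]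
      rw [hoapp, hfR x hx]
      omega
    exact Prod.ext h1 h2
  have hcard := Fintype.card_of_bijective ⟨hΨinj, hΨsurj⟩
  rw [hcard, Fintype.card_prod]
  have e1 : {x : β // x ∈ K} ≃ Fin k := Fintype.equivFinOfCardEq (by simp [hk])
  have e2 : {x : β // x ∈ R} ≃ Fin (N - 1 - k) :=
    Fintype.equivFinOfCardEq (by simp only [Fintype.card_coe, hRcard]; omega)
  rw [Fintype.card_equiv e1, Fintype.card_equiv e2]
  simp only [Fintype.card_coe, hRcard]
  congr 1
  congr 1
  omega


lemma sumA {N : ℕ} (hN : Fintype.card β = N) (b₀ : β) (g : Finset β → ℝ) :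
    ∑ o : β ≃ Fin N, g (univ.filter fun x => o x < o b₀)
      = ∑ k ∈ range N, ∑ K ∈ (univ.erase b₀).powersetCard k,
          ((k.factorial * (N - 1 - k).factorial : ℕ) : ℝ) * g K := by
  classical
  have hN1 : 1 ≤ N := by
    have : 0 < Fintype.card β := @Fintype.card_pos _ _ ⟨b₀⟩
    omega
  have hmaps : ∀ o : β ≃ Fin N, o ∈ (univ : Finset (β ≃ Fin N)) →
      (univ.filter fun x => o x < o b₀) ∈ (univ.erase b₀).powerset := by
    intro o _
    rw [mem_powerset]
    intro x hx
    rw [mem_filter] at hx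
    rw [mem_erase]
    refine ⟨fun hb => ?_, mem_univ _⟩
    subst hb
    exact lt_irrefl _ hx.2
  have key := Finset.sum_fiberwise_of_maps_to' hmaps g
  rw [← key]
  have step : ∀ K ∈ (univ.erase b₀).powerset,
      (∑ _o ∈ (univ : Finset (β ≃ Fin N)).filter
          (fun o => (univ.filter fun x => o x < o b₀) = K), g K)
        = ((K.card.factorial * (N - 1 - K.card).factorial : ℕ) : ℝ) * g K := by
    intro K hK
    rw [sum_const, nsmul_eq_mul]
    congr 1
    have hfc := fiber_card hN b₀ K (mem_powerset.mp hK)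
    rw [Fintype.card_subtype] at hfc
    exact_mod_cast hfc
  rw [Finset.sum_congr rfl step]
  rw [powerset_card_biUnion, sum_biUnion ((pairwise_disjoint_powersetCard _).set_pairwise _)]
  have hcard : (univ.erase b₀).card = N - 1 := by
    rw [card_erase_of_mem (mem_univ _), card_univ, hN]
  rw [hcard]
  have hrange : N - 1 + 1 = N := by omega
  rw [hrange]
  refine Finset.sum_congr rfl fun k _ => Finset.sum_congr rfl fun K hK => ?_
  rw [(mem_powersetCard.mp hK).2]


end Aux

/-- Grabisch's representation index of a set `T` for a set function `μ`. -/
noncomputable def IT {α : Type*} [Fintype α] [DecidableEq α]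
    (μ : Finset α → ℝ) (T : Finset α) : ℝ :=
  ∑ k ∈ range (Fintype.card α - T.card + 1),
    ((Nat.factorial (Fintype.card α - k - T.card) * Nat.factorial k : ℕ) : ℝ) /
      (Nat.factorial (Fintype.card α - T.card + 1)) *
      ∑ K ∈ (Finset.univ \ T).powersetCard k,
        ∑ L ∈ T.powerset, (-1 : ℝ) ^ (T.card - L.card) * μ (L ∪ K)

set_option maxHeartbeats 1000000 in
theorem IT_orders {α : Type*} [Fintype α] [DecidableEq α]
    (μ : Finset α → ℝ) (hμ : μ ∅ = 0) (T : Finset α) (t₁ : α) (ht : t₁ ∈ T) :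
    IT μ T
      = (1 / (Nat.factorial (Fintype.card α - T.card + 1)) : ℝ) *
          ∑ o : {x : α // x ∈ insert t₁ (Finset.univ \ T)} ≃
              Fin ((insert t₁ (Finset.univ \ T)).card),
            ∑ L ∈ T.powerset, (-1 : ℝ) ^ (T.card - L.card) *
              μ (((Finset.univ.filter
                    fun x : {x : α // x ∈ insert t₁ (Finset.univ \ T)} =>
                      o x < o ⟨t₁, Finset.mem_insert_self t₁ _⟩).image Subtype.val) ∪ L) := by
  classical
  set n := Fintype.card α with hn
  set X' := insert t₁ (Finset.univ \ T) with hX'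
  have ht₁ : t₁ ∉ Finset.univ \ T := by simp [ht]
  have hsd : (Finset.univ \ T).card = n - T.card := by
    rw [← Finset.compl_eq_univ_sdiff, Finset.card_compl]
  have hNcard : X'.card = n - T.card + 1 := by
    rw [hX', card_insert_of_notMem ht₁, hsd]
  set b₀ : {x : α // x ∈ X'} := ⟨t₁, Finset.mem_insert_self t₁ _⟩ with hb₀
  have hN : Fintype.card {x : α // x ∈ X'} = X'.card := Fintype.card_coe _
  rw [sumA hN b₀ (fun A => ∑ L ∈ T.powerset, (-1 : ℝ) ^ (T.card - L.card) *
        μ ((A.image Subtype.val) ∪ L))]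
  rw [IT, mul_sum, hNcard]
  refine Finset.sum_congr rfl fun k hk => ?_
  rw [mem_range] at hk
  rw [mul_sum, mul_sum]
  -- bijection between powersetCards
  have hval_inj : Function.Injective (Subtype.val : {x : α // x ∈ X'} → α) :=
    Subtype.val_injective
  have hrange : ∀ y ∈ Finset.univ \ T, y ∈ Set.range (Subtype.val : {x : α // x ∈ X'} → α) := by
    intro y hy
    exact ⟨⟨y, by rw [hX']; exact mem_insert_of_mem hy⟩, rfl⟩
  refine Finset.sum_nbij' (fun K' => K'.preimage Subtype.val
      (Set.injOn_of_injective hval_inj)) (fun K => K.image Subtype.val) ?_ ?_ ?_ ?_ ?_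
  · intro K' hK'
    rw [mem_powersetCard] at hK' ⊢
    obtain ⟨hsub, hcard⟩ := hK'
    constructor
    · intro x hx
      rw [Finset.mem_preimage] at hx
      rw [mem_erase]
      refine ⟨fun hxb => ?_, mem_univ _⟩
      subst hxb
      exact ht₁ (hsub hx)
    · rw [Finset.card_preimage]
      rw [Finset.filter_true_of_mem (fun y hy => hrange y (hsub hy)), hcard]
  · intro K hK
    rw [mem_powersetCard] at hK ⊢
    obtain ⟨hsub, hcard⟩ := hK
    constructor
    · intro y hy
      rw [Finset.mem_image] at hy
      obtain ⟨x, hx, rfl⟩ := hy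
      have hxb : x ≠ b₀ := (mem_erase.mp (hsub hx)).1
      have hx2 : ↑x = t₁ ∨ ↑x ∈ Finset.univ \ T := mem_insert.mp x.2
      rcases hx2 with h | h
      · exact absurd (Subtype.ext h) hxb
      · exact h
    · rw [Finset.card_image_of_injective _ hval_inj, hcard]
  · intro K' hK'
    rw [mem_powersetCard] at hK'
    show (K'.preimage Subtype.val (Set.injOn_of_injective hval_inj)).image Subtype.val = K'
    rw [Finset.image_preimage]
    exact Finset.filter_true_of_mem (fun y hy => hrange y (hK'.1 hy))
  · intro K _
    ext x
    rw [Finset.mem_preimage, Finset.mem_image]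
    constructor
    · rintro ⟨y, hy, hval⟩
      rwa [← hval_inj hval]
    · intro hx
      exact ⟨x, hx, rfl⟩
  · intro K' hK'
    show _ = (1 / ((n - T.card + 1).factorial : ℝ)) *
      (((k.factorial * (n - T.card + 1 - 1 - k).factorial : ℕ) : ℝ) *
        ∑ L ∈ T.powerset, (-1 : ℝ) ^ (T.card - L.card) *
          μ (((K'.preimage Subtype.val (Set.injOn_of_injective hval_inj)).image
              Subtype.val) ∪ L))
    rw [Finset.image_preimage, Finset.filter_true_of_mem
      (fun y hy => hrange y ((mem_powersetCard.mp hK').1 hy))]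
    have harg : n - T.card + 1 - 1 - k = n - k - T.card := by omega
    rw [harg]
    have hsum : ∀ L ∈ T.powerset, (-1 : ℝ) ^ (T.card - L.card) * μ (L ∪ K')
        = (-1 : ℝ) ^ (T.card - L.card) * μ (K' ∪ L) := by
      intro L _
      rw [Finset.union_comm]
    rw [Finset.sum_congr rfl hsum]
    push_cast
    ring
end
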